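/- Let T be a contraction on a Hilbert space H, and let Q be the positive square root of the strong operator limit of TⁿT*ⁿ. Then ‖Q T* h‖ = ‖Q h‖ for all h ∈ H; consequently, the densely defined map V* on the closure of Ran Q given by V*(Qh) = Q T* h is a well-defined isometry. -/

import Mathlib

open ContinuousLinearMap Filter Topology

/-- Let `T` be a contraction on a complex Hilbert space and `Q` the positive square root of
the strong operator limit of `TⁿT*ⁿ` (i.e. `Q ≥ 0` and `TⁿT*ⁿ → Q²` strongly).  Then
`‖Q T* h‖ = ‖Q h‖` for all `h`; consequently the densely defined map `V*(Qh) = Q T* h`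
on the closure of `Ran Q` is a well-defined isometry. -/
theorem Q_Tstar_isometry {H : Type*} [NormedAddCommGroup H] [InnerProductSpace ℂ H]
    [CompleteSpace H] (T Q : H →L[ℂ] H) (hT : ‖T‖ ≤ 1) (hQ : Q.IsPositive)
    (hlim : ∀ h : H,
      Tendsto (fun n : ℕ => (T ^ n * (adjoint T) ^ n) h) atTop (𝓝 ((Q * Q) h))) :
    ∀ h : H, ‖Q (adjoint T h)‖ = ‖Q h‖ := by
  have hsa : adjoint Q = Q := ContinuousLinearMap.isSelfAdjoint_iff'.mp hQ.isSelfAdjoint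
  have inner_eq : ∀ x : H, ((‖Q x‖ : ℂ)^2) = inner ℂ ((Q * Q) x) x := by
    intro x
    rw [ContinuousLinearMap.mul_apply]
    rw [← adjoint_inner_right, hsa, inner_self_eq_norm_sq_to_K]
    norm_cast
  have adj_pow : ∀ n : ℕ, adjoint (T ^ n) = (adjoint T) ^ n := by
    intro n
    rw [← star_eq_adjoint, ← star_eq_adjoint, star_pow]
  have seq : ∀ x : H, Tendsto (fun n : ℕ => ((‖(adjoint T ^ n) x‖ : ℂ)^2)) atTop
      (𝓝 (inner ℂ ((Q * Q) x) x : ℂ)) := by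
    intro x
    have h2 : Tendsto (fun n : ℕ => (inner ℂ ((T ^ n * (adjoint T) ^ n) x) x : ℂ)) atTop
        (𝓝 (inner ℂ ((Q * Q) x) x : ℂ)) :=
      (hlim x).inner tendsto_const_nhds
    refine h2.congr fun n => ?_
    rw [ContinuousLinearMap.mul_apply]
    rw [← adj_pow, ← adjoint_inner_right, inner_self_eq_norm_sq_to_K, adj_pow]
    norm_cast
  intro h
  have s1 := seq h
  have s2 : Tendsto (fun n : ℕ => ((‖(adjoint T ^ n) (adjoint T h)‖ : ℂ)^2)) atTop
      (𝓝 (inner ℂ ((Q * Q) h) h : ℂ)) := by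
    have := s1.comp (tendsto_add_atTop_nat 1)
    refine this.congr fun n => ?_
    simp only [Function.comp_apply]
    rw [pow_succ]
    rfl
  have s3 := seq (adjoint T h)
  have key : (inner ℂ ((Q * Q) (adjoint T h)) (adjoint T h) : ℂ) = inner ℂ ((Q * Q) h) h :=
    tendsto_nhds_unique s3 s2
  have e1 := inner_eq (adjoint T h)
  have e2 := inner_eq h
  rw [key, ← e2] at e1
  have : (‖Q (adjoint T h)‖ : ℝ)^2 = ‖Q h‖^2 := by exact_mod_cast e1
  nlinarith [norm_nonneg (Q (adjoint T h)), norm_nonneg (Q h)]
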